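/- Let f(X) = ‖AX − XB‖_F², let X* = argmin over permutation matrices of f, and suppose X^{(k)} ∈ D_n satisfies ‖X^{(k)} − X*‖_F ≤ a for some a ∈ [0, 1/2). If ε > 0 and λ ≥ 2(a+ε)(1−a+ε)L/(1−2a) where L is a Lipschitz constant of f on D_n, then for every X ∈ D_n, f(X) + λ·Σ_{i,j} X_{ij}/(X^{(k)}_{ij}+ε) ≥ f(X*) + λ·Σ_{i,j} X*_{ij}/(X^{(k)}_{ij}+ε). -/

import Mathlib

open Finset Matrix

/-- Frobenius norm of a square real matrix. -/
noncomputable def frob {n : ℕ} (M : Matrix (Fin n) (Fin n) ℝ) : ℝ :=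
  Real.sqrt (∑ i, ∑ j, (M i j) ^ 2)

/-- `X` is doubly stochastic. -/
def IsDS {n : ℕ} (X : Matrix (Fin n) (Fin n) ℝ) : Prop :=
  (∀ i j, 0 ≤ X i j) ∧ (∀ i, ∑ j, X i j = 1) ∧ (∀ j, ∑ i, X i j = 1)

/-- `X` is a permutation matrix. -/
def IsPermMat {n : ℕ} (X : Matrix (Fin n) (Fin n) ℝ) : Prop :=
  (∀ i j, X i j = 0 ∨ X i j = 1) ∧ (∀ i, ∑ j, X i j = 1) ∧ (∀ j, ∑ i, X i j = 1)

lemma abs_entry_le_frob {n : ℕ} (M : Matrix (Fin n) (Fin n) ℝ) (i j : Fin n) :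
    |M i j| ≤ frob M := by
  rw [frob, ← Real.sqrt_sq_eq_abs]
  apply Real.sqrt_le_sqrt
  calc (M i j)^2 ≤ ∑ j', (M i j')^2 :=
        Finset.single_le_sum (f := fun j' => (M i j')^2)
          (fun _ _ => sq_nonneg _) (Finset.mem_univ j)
  _ ≤ ∑ i', ∑ j', (M i' j')^2 :=
        Finset.single_le_sum (f := fun i' => ∑ j', (M i' j')^2)
          (fun i' _ => Finset.sum_nonneg fun _ _ => sq_nonneg _) (Finset.mem_univ i)

lemma frob_le_l1 {n : ℕ} (M : Matrix (Fin n) (Fin n) ℝ) :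
    frob M ≤ ∑ i, ∑ j, |M i j| := by
  rw [frob]
  have h1 : ∑ i, ∑ j, (M i j)^2 ≤ (∑ i, ∑ j, |M i j|)^2 := by
    rw [← Fintype.sum_prod_type (f := fun p : Fin n × Fin n => (M p.1 p.2)^2),
        ← Fintype.sum_prod_type (f := fun p : Fin n × Fin n => |M p.1 p.2|)]
    calc ∑ p : Fin n × Fin n, (M p.1 p.2)^2 = ∑ p : Fin n × Fin n, |M p.1 p.2|^2 := by
          simp [sq_abs]
      _ ≤ (∑ p : Fin n × Fin n, |M p.1 p.2|)^2 :=
          Finset.sum_sq_le_sq_sum_of_nonneg (fun _ _ => abs_nonneg _)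
  calc Real.sqrt (∑ i, ∑ j, (M i j)^2) ≤ Real.sqrt ((∑ i, ∑ j, |M i j|)^2) :=
        Real.sqrt_le_sqrt h1
    _ = ∑ i, ∑ j, |M i j| := Real.sqrt_sq (by positivity)

set_option maxHeartbeats 1000000 in
theorem stmt_8 {n : ℕ} (A B : Matrix (Fin n) (Fin n) ℝ)
    (Xstar Xk : Matrix (Fin n) (Fin n) ℝ) (hXs : IsPermMat Xstar)
    (hmin : ∀ P : Matrix (Fin n) (Fin n) ℝ, IsPermMat P →
      frob (A * Xstar - Xstar * B) ^ 2 ≤ frob (A * P - P * B) ^ 2)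
    (hXk : IsDS Xk) (a ε L lam : ℝ) (ha0 : 0 ≤ a) (ha : a < 1 / 2) (hε : 0 < ε)
    (hclose : frob (Xk - Xstar) ≤ a)
    (hL : ∀ X Y : Matrix (Fin n) (Fin n) ℝ, IsDS X → IsDS Y →
      |frob (A * X - X * B) ^ 2 - frob (A * Y - Y * B) ^ 2| ≤ L * frob (X - Y))
    (hlam : 2 * (a + ε) * (1 - a + ε) * L / (1 - 2 * a) ≤ lam) :
    ∀ X : Matrix (Fin n) (Fin n) ℝ, IsDS X →
      frob (A * Xstar - Xstar * B) ^ 2 + lam * ∑ i, ∑ j, Xstar i j / (Xk i j + ε) ≤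
        frob (A * X - X * B) ^ 2 + lam * ∑ i, ∑ j, X i j / (Xk i j + ε) := by
  intro X hX
  obtain ⟨hXnn, hXrow, hXcol⟩ := hX
  obtain ⟨hXs01, hXsrow, hXscol⟩ := hXs
  obtain ⟨hKnn, hKrow, hKcol⟩ := hXk
  have hεa : (0:ℝ) < a + ε := by linarith
  have h1aε : (0:ℝ) < 1 - a + ε := by linarith
  have h12a : (0:ℝ) < 1 - 2 * a := by linarith
  -- entry bounds
  have hXle1 : ∀ i j, X i j ≤ 1 := by
    intro i j
    have := Finset.single_le_sum (fun j' _ => hXnn i j') (Finset.mem_univ j)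
    rw [hXrow i] at this; exact this
  have hKd : ∀ i j, |Xk i j - Xstar i j| ≤ a := by
    intro i j
    have h := abs_entry_le_frob (Xk - Xstar) i j
    simpa [Matrix.sub_apply] using h.trans hclose
  have hD : ∀ i j, 0 < Xk i j + ε := fun i j => by
    have := hKnn i j; linarith
  set d : Fin n → Fin n → ℝ := fun i j => X i j - Xstar i j with hd
  set S : ℝ := ∑ i, ∑ j, max (d i j) 0 with hS
  have hSnn : 0 ≤ S :=
    Finset.sum_nonneg fun _ _ => Finset.sum_nonneg fun _ _ => le_max_right _ _
  -- sum of d is zero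
  have hsum0 : ∑ i, ∑ j, d i j = 0 := by
    have : ∀ i, ∑ j, d i j = 0 := by
      intro i
      simp only [hd]
      rw [Finset.sum_sub_distrib, hXrow i, hXsrow i]; ring
    simp [this]
  have hSneg : ∑ i, ∑ j, min (d i j) 0 = -S := by
    have : ∑ i, ∑ j, (max (d i j) 0 + min (d i j) 0) = ∑ i, ∑ j, d i j := by
      congr 1; ext i; congr 1; ext j; rw [max_add_min, add_zero]
    simp only [Finset.sum_add_distrib] at this
    rw [hsum0] at this
    linarith [this]
  -- l1 = 2S
  have hl1 : ∑ i, ∑ j, |d i j| = 2 * S := by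
    have : ∀ i j, |d i j| = max (d i j) 0 - min (d i j) 0 := by
      intro i j; rw [max_sub_min_eq_abs]; simp [abs_sub_comm]
    calc ∑ i, ∑ j, |d i j| = ∑ i, ∑ j, (max (d i j) 0 - min (d i j) 0) := by
          congr 1; ext i; congr 1; ext j; exact this i j
      _ = S - (-S) := by
          simp only [Finset.sum_sub_distrib]; rw [← hS, hSneg]
      _ = 2 * S := by ring
  -- per-entry lower bound on penalty difference
  have hkey : ∀ i j, max (d i j) 0 / (a + ε) + min (d i j) 0 / (1 - a + ε)
      ≤ d i j / (Xk i j + ε) := by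
    intro i j
    rcases hXs01 i j with h0 | h1
    · have hdnn : 0 ≤ d i j := by simp [hd, h0]; exact hXnn i j
      have hKa : Xk i j + ε ≤ a + ε := by
        have := hKd i j; rw [h0] at this
        have := abs_le.mp this; linarith [this.2]
      rw [max_eq_left hdnn, min_eq_right hdnn]
      rw [zero_div, add_zero]
      gcongr
      exact hD i j
    · have hdnp : d i j ≤ 0 := by simp [hd, h1]; linarith [hXle1 i j]
      have hKa : 1 - a + ε ≤ Xk i j + ε := by
        have := hKd i j; rw [h1] at this
        have := abs_le.mp this; linarith [this.1]
      rw [max_eq_right hdnp, min_eq_left hdnp, zero_div, zero_add]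
      rw [div_le_div_iff₀ h1aε (hD i j)]
      nlinarith [hD i j]
  -- sum the per-entry bounds
  have hgdiff : S / (a + ε) + (-S) / (1 - a + ε) ≤ ∑ i, ∑ j, d i j / (Xk i j + ε) := by
    have := Finset.sum_le_sum (s := Finset.univ) (fun (i : Fin n) _ =>
      Finset.sum_le_sum (s := Finset.univ) (fun (j : Fin n) _ => hkey i j))
    calc S / (a + ε) + (-S) / (1 - a + ε)
        = ∑ i, ∑ j, (max (d i j) 0 / (a + ε) + min (d i j) 0 / (1 - a + ε)) := by
          simp only [Finset.sum_add_distrib, ← Finset.sum_div]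
          rw [← hS, hSneg]
      _ ≤ _ := this
  -- penalty sums difference
  have hpen : ∑ i, ∑ j, X i j / (Xk i j + ε) - ∑ i, ∑ j, Xstar i j / (Xk i j + ε)
      = ∑ i, ∑ j, d i j / (Xk i j + ε) := by
    simp only [hd, sub_div, Finset.sum_sub_distrib]
  -- main case split
  rcases eq_or_lt_of_le hSnn with hS0 | hSpos
  · -- S = 0 forces X = Xstar
    have hmax0 : ∀ i j, max (d i j) 0 = 0 := by
      intro i j
      have h := (Finset.sum_eq_zero_iff_of_nonneg (fun i _ =>
        Finset.sum_nonneg fun j _ => le_max_right (d i j) 0)).mp hS0.symm i (Finset.mem_univ i)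
      exact (Finset.sum_eq_zero_iff_of_nonneg (fun j _ => le_max_right (d i j) 0)).mp h j
        (Finset.mem_univ j)
    have hmin0 : ∀ i j, min (d i j) 0 = 0 := by
      have hs : ∑ i, ∑ j, (- min (d i j) 0) = 0 := by
        simp only [Finset.sum_neg_distrib]
        rw [hSneg, ← hS0]; ring
      intro i j
      have h := (Finset.sum_eq_zero_iff_of_nonneg (fun i _ =>
        Finset.sum_nonneg fun j _ => neg_nonneg.mpr (min_le_right (d i j) 0))).mp hs i
        (Finset.mem_univ i)
      have := (Finset.sum_eq_zero_iff_of_nonneg (fun j _ =>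
        neg_nonneg.mpr (min_le_right (d i j) 0))).mp h j (Finset.mem_univ j)
      linarith
    have hXeq : X = Xstar := by
      ext i j
      have h1 := hmax0 i j
      have h2 := hmin0 i j
      have : d i j = 0 := by
        have := max_add_min (d i j) 0
        rw [h1, h2] at this; linarith
      simpa [hd, sub_eq_zero] using this
    rw [hXeq]
  · -- S > 0 : nontrivial case
    have hXsDS : IsDS Xstar := by
      refine ⟨fun i j => ?_, hXsrow, hXscol⟩
      rcases hXs01 i j with h | h <;> rw [h] <;> norm_num
    have hLd := hL X Xstar ⟨hXnn, hXrow, hXcol⟩ hXsDS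
    -- frob (X - Xstar) > 0
    have hfpos : 0 < frob (X - Xstar) := by
      obtain ⟨i, hi⟩ : ∃ i, 0 < ∑ j, max (d i j) 0 := by
        by_contra h
        push_neg at h
        have : S ≤ 0 := Finset.sum_nonpos fun i _ => h i
        linarith
      obtain ⟨j, hj⟩ : ∃ j, 0 < max (d i j) 0 := by
        by_contra h
        push_neg at h
        have : ∑ j, max (d i j) 0 ≤ 0 := Finset.sum_nonpos fun j _ => h j
        linarith
      have hdpos : 0 < d i j := by
        rcases le_or_gt (d i j) 0 with h | h
        · rw [max_eq_right h] at hj; linarith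
        · exact h
      have := abs_entry_le_frob (X - Xstar) i j
      simp only [Matrix.sub_apply] at this
      calc (0:ℝ) < d i j := hdpos
        _ ≤ |X i j - Xstar i j| := le_abs_self _
        _ ≤ frob (X - Xstar) := this
    have hL0 : 0 ≤ L := by
      nlinarith [abs_nonneg (frob (A * X - X * B) ^ 2 - frob (A * Xstar - Xstar * B) ^ 2), hLd]
    have hlam0 : 0 ≤ lam := by
      have : 0 ≤ 2 * (a + ε) * (1 - a + ε) * L / (1 - 2 * a) := by
        apply div_nonneg _ (le_of_lt h12a)
        have := mul_nonneg (mul_nonneg (by linarith : (0:ℝ) ≤ 2 * (a + ε)) h1aε.le) hL0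
        linarith [this]
      linarith
    -- frob bound
    have hfle : frob (X - Xstar) ≤ 2 * S := by
      have h := frob_le_l1 (X - Xstar)
      simp only [Matrix.sub_apply] at h
      rw [show ∑ i, ∑ j, |X i j - Xstar i j| = ∑ i, ∑ j, |d i j| from rfl, hl1] at h
      exact h
    -- assemble
    set c : ℝ := S / (a + ε) + (-S) / (1 - a + ε) with hc
    have hceq : c = S * (1 - 2 * a) / ((a + ε) * (1 - a + ε)) := by
      rw [hc]; field_simp; ring
    have hcnn : 0 ≤ c := by
      rw [hceq]
      apply div_nonneg (by nlinarith) (by positivity)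
    have hl0c : 2 * (a + ε) * (1 - a + ε) * L / (1 - 2 * a) * c = 2 * L * S := by
      rw [hceq]; field_simp
    have step3 : 2 * (a + ε) * (1 - a + ε) * L / (1 - 2 * a) * c ≤ lam * c :=
      mul_le_mul_of_nonneg_right hlam hcnn
    have step6 : lam * c ≤ lam * (∑ i, ∑ j, d i j / (Xk i j + ε)) :=
      mul_le_mul_of_nonneg_left hgdiff hlam0
    have step7 : frob (A * Xstar - Xstar * B) ^ 2 - frob (A * X - X * B) ^ 2
        ≤ L * frob (X - Xstar) := by
      have := abs_le.mp hLd
      linarith [this.1]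
    have step5 : L * frob (X - Xstar) ≤ 2 * L * S := by nlinarith
    have final : frob (A * Xstar - Xstar * B) ^ 2 - frob (A * X - X * B) ^ 2
        ≤ lam * (∑ i, ∑ j, d i j / (Xk i j + ε)) := by linarith
    rw [← hpen, mul_sub] at final
    linarith
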